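/- Equation (ab) of the paper: let i, j ∈ ZMod r with i ≠ 0, j ≠ i and j ≠ −i. Then ∑_{a ∈ ZMod r} χ( 2(j−i) + 3·i·(a²+a+1)⁻¹ ) = ∑_{a ∈ ZMod r} χ( 2(j−i) + 3·i·((2a+1)·(a²+a+1)⁻¹)² ), where all arithmetic is in ZMod r (a² + a + 1 ≠ 0 for all a since r ≡ 2 (mod 3)). -/

import Mathlib

open Finset

open scoped Classical

section Aux

variable {F : Type*} [Field F] [Fintype F] [DecidableEq F]

private lemma quadChar_inv {a : F} (ha : a ≠ 0) :
    quadraticChar F a⁻¹ = quadraticChar F a := by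
  calc quadraticChar F a⁻¹
      = quadraticChar F a⁻¹ * (quadraticChar F a * quadraticChar F a) := by
        rw [← pow_two, quadraticChar_sq_one ha, mul_one]
    _ = (quadraticChar F a⁻¹ * quadraticChar F a) * quadraticChar F a := by ring
    _ = quadraticChar F a := by rw [← map_mul, inv_mul_cancel₀ ha, map_one, one_mul]

private lemma quadChar_sum_linear (hF : ringChar F ≠ 2) {c : F} (e : F) (hc : c ≠ 0) :
    ∑ x : F, quadraticChar F (c * x + e) = 0 := by
  rw [← quadraticChar_sum_zero hF]
  exact Fintype.sum_bijective _ ((Equiv.mulLeft₀ c hc).trans (Equiv.addRight e)).bijective _ _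
    (fun x => rfl)

private lemma quadChar_card_sqrts' (hF : ringChar F ≠ 2) (t : F) :
    (((univ : Finset F).filter fun x : F => x ^ 2 = t).card : ℤ)
      = quadraticChar F t + 1 := by
  rw [← quadraticChar_card_sqrts hF t]
  congr 1
  apply Finset.card_bij (fun a _ => a)
  · intro a ha; simp only [mem_filter, mem_univ, true_and] at ha
    simp [Set.mem_toFinset, ha]
  · intro a _ b _ h; exact h
  · intro b hb; exact ⟨b, by simpa [Set.mem_toFinset] using hb, rfl⟩

private lemma quadChar_sum_sq_fiber (hF : ringChar F ≠ 2) (G : F → ℤ) :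
    ∑ x : F, G (x ^ 2) = ∑ t : F, (quadraticChar F t + 1) * G t := by
  rw [← Finset.sum_fiberwise' (univ : Finset F) (fun x : F => x ^ 2) G]
  refine Finset.sum_congr rfl fun t _ => ?_
  rw [Finset.sum_const, nsmul_eq_mul, ← quadChar_card_sqrts' hF t]

private lemma quadChar_sum_sq_add_self (hF : ringChar F ≠ 2) :
    ∑ s : F, quadraticChar F (s ^ 2 + s) = -1 := by
  have h0 : quadraticChar F ((0:F) ^ 2 + 0) + ∑ s ∈ (univ : Finset F).erase 0,
      quadraticChar F (s ^ 2 + s) = ∑ s : F, quadraticChar F (s ^ 2 + s) :=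
    Finset.add_sum_erase (univ : Finset F) (fun s => quadraticChar F (s ^ 2 + s)) (mem_univ 0)
  have h1 : quadraticChar F (1:F) + ∑ w ∈ (univ : Finset F).erase 1, quadraticChar F w
      = ∑ w : F, quadraticChar F w :=
    Finset.add_sum_erase (univ : Finset F) (fun w => quadraticChar F w) (mem_univ 1)
  have key : ∑ s ∈ (univ : Finset F).erase 0, quadraticChar F (s ^ 2 + s)
      = ∑ w ∈ (univ : Finset F).erase 1, quadraticChar F w := by
    apply Finset.sum_nbij' (i := fun s => 1 + s⁻¹) (j := fun w => (w - 1)⁻¹)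
    · intro a ha
      simp only [mem_erase, mem_univ, and_true] at ha ⊢
      intro h
      exact inv_ne_zero ha (by linear_combination h)
    · intro b hb
      simp only [mem_erase, mem_univ, and_true] at hb ⊢
      exact inv_ne_zero (sub_ne_zero.mpr hb)
    · intro a ha
      simp only [mem_erase, mem_univ, and_true] at ha
      simp [inv_inv]
    · intro b hb
      simp only [mem_erase, mem_univ, and_true] at hb
      rw [inv_inv]
      ring
    · intro a ha
      simp only [mem_erase, mem_univ, and_true] at ha
      have : a ^ 2 + a = a ^ 2 * (1 + a⁻¹) := by field_simp
      rw [this, map_mul, quadraticChar_sq_one' ha, one_mul]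
  rw [← h0, key]
  have hz : quadraticChar F ((0:F) ^ 2 + 0) = 0 := by simp
  have hsum := quadraticChar_sum_zero hF
  rw [← h1] at hsum
  have hone : quadraticChar F (1 : F) = 1 := by simp
  omega

private lemma quadChar_sum_quadratic (hF : ringChar F ≠ 2) {c e : F} (hc : c ≠ 0) (he : e ≠ 0) :
    ∑ x : F, quadraticChar F (c * x ^ 2 + e) = -quadraticChar F c := by
  rw [quadChar_sum_sq_fiber hF (fun t => quadraticChar F (c * t + e))]
  have split : ∑ t : F, (quadraticChar F t + 1) * quadraticChar F (c * t + e)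
      = (∑ t : F, quadraticChar F t * quadraticChar F (c * t + e))
        + ∑ t : F, quadraticChar F (c * t + e) := by
    rw [← Finset.sum_add_distrib]
    exact Finset.sum_congr rfl fun t _ => by ring
  rw [split, quadChar_sum_linear hF e hc, add_zero]
  have hk : e * c⁻¹ ≠ 0 := mul_ne_zero he (inv_ne_zero hc)
  have reindex : ∑ t : F, quadraticChar F t * quadraticChar F (c * t + e)
      = ∑ s : F, quadraticChar F (e * c⁻¹ * s) * quadraticChar F (c * (e * c⁻¹ * s) + e) :=
    (Fintype.sum_bijective (fun s : F => e * c⁻¹ * s)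
      (Equiv.mulLeft₀ (e * c⁻¹) hk).bijective _ _ (fun s => rfl)).symm
  rw [reindex]
  have term : ∀ s : F, quadraticChar F (e * c⁻¹ * s) * quadraticChar F (c * (e * c⁻¹ * s) + e)
      = quadraticChar F (e * c⁻¹ * e) * quadraticChar F (s ^ 2 + s) := by
    intro s
    rw [← map_mul, ← map_mul]
    congr 1
    have : c * (e * c⁻¹ * s) = e * s := by field_simp
    rw [this]; ring
  simp only [term]
  rw [← Finset.mul_sum, quadChar_sum_sq_add_self hF]
  have : e * c⁻¹ * e = e ^ 2 * c⁻¹ := by ring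
  rw [this, map_mul, quadraticChar_sq_one' he, one_mul, quadChar_inv hc]
  ring

end Aux

private lemma aux_u_ne_zero (r : ℕ) [Fact r.Prime] (h3 : r % 3 = 2) (a : ZMod r) :
    a ^ 2 + a + 1 ≠ 0 := by
  intro h
  have hr3 : r ≠ 3 := by omega
  have h3F : (3 : ZMod r) ≠ 0 := by
    intro hh
    have : ((3 : ℕ) : ZMod r) = 0 := by exact_mod_cast hh
    rw [ZMod.natCast_eq_zero_iff] at this
    exact hr3 ((Nat.prime_dvd_prime_iff_eq (Fact.out) Nat.prime_three).mp this)
  have ha1 : a ≠ 1 := by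
    intro h1
    rw [h1] at h
    apply h3F
    linear_combination h
  have ha3 : a ^ 3 = 1 := by linear_combination (a - 1) * h
  have haunit : IsUnit a := by
    apply IsUnit.of_mul_eq_one (a ^ 2)
    linear_combination ha3
  set b := haunit.unit with hb
  have hba : (b : ZMod r) = a := haunit.unit_spec
  have hb3 : b ^ 3 = 1 := by
    ext
    push_cast [hba]
    exact ha3
  have hbne : b ≠ 1 := fun hh => ha1 (by rw [← hba, hh, Units.val_one])
  have hdvd : orderOf b ∣ 3 := orderOf_dvd_of_pow_eq_one hb3
  have horder : orderOf b = 3 := by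
    rcases (Nat.prime_three).eq_one_or_self_of_dvd _ hdvd with h1 | h1
    · exact absurd (orderOf_eq_one_iff.mp h1) hbne
    · exact h1
  have hcard : orderOf b ∣ Fintype.card (ZMod r)ˣ := orderOf_dvd_card
  rw [horder, ZMod.card_units_eq_totient, Nat.totient_prime Fact.out] at hcard
  have hr2 : 2 ≤ r := (Fact.out : r.Prime).two_le
  omega

/-- The quadratic character of `ZMod r` with values in `ℤ`:
`χ(m) = 1` if `m` is a nonzero square, `−1` if `m` is a nonsquare, `χ(0) = 0`. -/
noncomputable def chi (r : ℕ) (m : ZMod r) : ℤ :=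
  if m = 0 then 0 else if IsSquare m then 1 else -1

private lemma chi_eq_quadChar (r : ℕ) [Fact r.Prime] (m : ZMod r) :
    chi r m = quadraticChar (ZMod r) m := by
  rw [chi]
  by_cases h0 : m = 0
  · simp [h0, quadraticChar_zero]
  · by_cases hsq : IsSquare m
    · simp [h0, hsq, ((quadraticChar_one_iff_isSquare h0).mpr hsq)]
    · simp [h0, hsq, quadraticChar_neg_one_iff_not_isSquare.mpr hsq]

/-- Equation (ab): for `i ≠ 0`, `j ≠ ±i`,
`∑_a χ(2(j−i) + 3i(a²+a+1)⁻¹) = ∑_a χ(2(j−i) + 3i((2a+1)(a²+a+1)⁻¹)²)`. -/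
theorem stmt12 (r : ℕ) [NeZero r] (hr : r.Prime) (hodd : Odd r) (h3 : r % 3 = 2)
    (i j : ZMod r) (hi : i ≠ 0) (hji : j ≠ i) (hji' : j ≠ -i) :
    ∑ a : ZMod r, chi r (2 * (j - i) + 3 * i * (a ^ 2 + a + 1)⁻¹) =
      ∑ a : ZMod r, chi r (2 * (j - i) + 3 * i * ((2 * a + 1) * (a ^ 2 + a + 1)⁻¹) ^ 2) := by
  haveI : Fact r.Prime := ⟨hr⟩
  have hr2 : r ≠ 2 := by rintro rfl; exact (Nat.not_odd_iff_even.mpr (by decide)) hodd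
  have hr3 : r ≠ 3 := by omega
  have hchar : ringChar (ZMod r) ≠ 2 := by rw [ZMod.ringChar_zmod_n]; exact hr2
  have h2 : (2 : ZMod r) ≠ 0 := by
    intro hh
    have : ((2 : ℕ) : ZMod r) = 0 := by exact_mod_cast hh
    rw [ZMod.natCast_eq_zero_iff] at this
    exact hr2 ((Nat.prime_dvd_prime_iff_eq hr Nat.prime_two).mp this)
  have h3F : (3 : ZMod r) ≠ 0 := by
    intro hh
    have : ((3 : ℕ) : ZMod r) = 0 := by exact_mod_cast hh
    rw [ZMod.natCast_eq_zero_iff] at this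
    exact hr3 ((Nat.prime_dvd_prime_iff_eq hr Nat.prime_three).mp this)
  have h4 : (4 : ZMod r) ≠ 0 := by
    have h42 : (4 : ZMod r) = 2 * 2 := by norm_num
    rw [h42]; exact mul_ne_zero h2 h2
  have hu : ∀ a : ZMod r, a ^ 2 + a + 1 ≠ 0 := aux_u_ne_zero r h3
  simp only [chi_eq_quadChar]
  set c : ZMod r := 2 * (j - i) with hcdef
  set d : ZMod r := 3 * i with hddef
  have hc : c ≠ 0 := mul_ne_zero h2 (sub_ne_zero.mpr hji)
  have hd : d ≠ 0 := mul_ne_zero h3F hi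
  set g : ZMod r → ℤ := fun b => quadraticChar (ZMod r) (b ^ 2 + b + 1)
    * quadraticChar (ZMod r) (c * (b ^ 2 + b + 1) + d) with hg
  set h : ZMod r → ℤ := fun a => quadraticChar (ZMod r)
    (c * (a ^ 2 + a + 1) ^ 2 + d * (2 * a + 1) ^ 2) with hh
  -- rewrite both sides
  have lhs_eq : ∀ b : ZMod r, quadraticChar (ZMod r) (c + d * (b ^ 2 + b + 1)⁻¹) = g b := by
    intro b
    have key : c + d * (b ^ 2 + b + 1)⁻¹
        = (c * (b ^ 2 + b + 1) + d) * (b ^ 2 + b + 1)⁻¹ := by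
      have huu : (b ^ 2 + b + 1) * (b ^ 2 + b + 1)⁻¹ = 1 := mul_inv_cancel₀ (hu b)
      linear_combination (-c) * huu
    simp only [hg, key, map_mul, quadChar_inv (hu b)]
    ring
  have rhs_eq : ∀ a : ZMod r,
      quadraticChar (ZMod r) (c + d * ((2 * a + 1) * (a ^ 2 + a + 1)⁻¹) ^ 2) = h a := by
    intro a
    have huu : (a ^ 2 + a + 1) * (a ^ 2 + a + 1)⁻¹ = 1 := mul_inv_cancel₀ (hu a)
    have key : c + d * ((2 * a + 1) * (a ^ 2 + a + 1)⁻¹) ^ 2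
        = (c * (a ^ 2 + a + 1) ^ 2 + d * (2 * a + 1) ^ 2) * ((a ^ 2 + a + 1)⁻¹) ^ 2 := by
      linear_combination (-(c * (1 + (a ^ 2 + a + 1) * (a ^ 2 + a + 1)⁻¹))) * huu
    simp only [hh, key, map_mul, quadraticChar_sq_one' (inv_ne_zero (hu a)), mul_one]
  calc ∑ b : ZMod r, quadraticChar (ZMod r) (c + d * (b ^ 2 + b + 1)⁻¹)
      = ∑ b : ZMod r, g b := Finset.sum_congr rfl fun b _ => lhs_eq b
    _ = ∑ a : ZMod r, h a := ?_
    _ = ∑ a : ZMod r, quadraticChar (ZMod r)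
          (c + d * ((2 * a + 1) * (a ^ 2 + a + 1)⁻¹) ^ 2) :=
        Finset.sum_congr rfl fun a _ => (rhs_eq a).symm
  -- core identity : ∑ g = ∑ h
  set a₀ : ZMod r := -(2⁻¹) with ha₀
  have hv0 : 2 * a₀ + 1 = 0 := by rw [ha₀]; field_simp; ring
  have hva : ∀ a : ZMod r, a ≠ a₀ → 2 * a + 1 ≠ 0 := by
    intro a hne hva0
    apply hne
    apply mul_left_cancel₀ h2
    linear_combination hva0 - hv0
  have hsplit : h a₀ + ∑ a ∈ (univ : Finset (ZMod r)).erase a₀, h a = ∑ a : ZMod r, h a :=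
    Finset.add_sum_erase (univ : Finset (ZMod r)) h (mem_univ a₀)
  have e1 : c * (a₀ ^ 2 + a₀ + 1) ^ 2 + d * (2 * a₀ + 1) ^ 2
      = c * (a₀ ^ 2 + a₀ + 1) ^ 2 := by rw [hv0]; ring
  have h_a₀ : h a₀ = quadraticChar (ZMod r) c := by
    simp only [hh, e1, map_mul, quadraticChar_sq_one' (hu a₀), mul_one]
  set f : ZMod r → ZMod r := fun a => (a ^ 2 - 1) * (2 * a + 1)⁻¹ with hf
  have step4 : ∀ a ∈ (univ : Finset (ZMod r)).erase a₀, h a = g (f a) := by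
    intro a ha
    have hv : 2 * a + 1 ≠ 0 := hva a (mem_erase.mp ha).1
    have hvv : (2 * a + 1) * (2 * a + 1)⁻¹ = 1 := mul_inv_cancel₀ hv
    have key1 : (f a) ^ 2 + f a + 1
        = (a ^ 2 + a + 1) ^ 2 * ((2 * a + 1)⁻¹) ^ 2 := by
      simp only [hf]
      linear_combination (-((a ^ 2 - 1) * (2 * a + 1)⁻¹ + 1
        + (2 * a + 1) * (2 * a + 1)⁻¹)) * hvv
    have key2 : c * ((a ^ 2 + a + 1) ^ 2 * ((2 * a + 1)⁻¹) ^ 2) + d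
        = (c * (a ^ 2 + a + 1) ^ 2 + d * (2 * a + 1) ^ 2) * ((2 * a + 1)⁻¹) ^ 2 := by
      linear_combination (-(d * (1 + (2 * a + 1) * (2 * a + 1)⁻¹))) * hvv
    have key3 : (a ^ 2 + a + 1) ^ 2 * ((2 * a + 1)⁻¹) ^ 2
        = ((a ^ 2 + a + 1) * (2 * a + 1)⁻¹) ^ 2 := by ring
    simp only [hg, hh]
    rw [key1, key2, key3,
      quadraticChar_sq_one' (mul_ne_zero (hu a) (inv_ne_zero hv)), one_mul,
      map_mul, quadraticChar_sq_one' (inv_ne_zero hv), mul_one]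
  have fiber : ∀ b : ZMod r,
      (((univ : Finset (ZMod r)).erase a₀).filter (fun a => f a = b)).card
        = ((univ : Finset (ZMod r)).filter
            (fun x : ZMod r => x ^ 2 = b ^ 2 + b + 1)).card := by
    intro b
    apply Finset.card_bij' (fun a _ => a - b) (fun x _ => x + b)
    · intro a ha
      simp only [mem_filter, mem_erase, mem_univ, true_and, and_true] at ha ⊢
      obtain ⟨hne, hfa⟩ := ha
      have hv : 2 * a + 1 ≠ 0 := hva a hne
      simp only [hf] at hfa
      have hfa' : a ^ 2 - 1 = b * (2 * a + 1) := by
        have h5 := congrArg (· * (2 * a + 1)) hfa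
        simpa [mul_assoc, inv_mul_cancel₀ hv] using h5
      linear_combination hfa'
    · intro x hx
      simp only [mem_filter, mem_univ, true_and] at hx
      simp only [mem_filter, mem_erase, mem_univ, true_and, and_true]
      have ha2 : (x + b) ^ 2 - 1 = b * (2 * (x + b) + 1) := by linear_combination hx
      have hne : x + b ≠ a₀ := by
        intro haa
        have hvz : 2 * (x + b) + 1 = 0 := by rw [haa]; exact hv0
        have h₁ : (x + b) ^ 2 - 1 = (0 : ZMod r) := by rw [ha2, hvz, mul_zero]
        apply h3F
        linear_combination (2 * (x + b) - 1) * hvz - 4 * h₁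
      refine ⟨hne, ?_⟩
      have hv : 2 * (x + b) + 1 ≠ 0 := hva _ hne
      simp only [hf]
      rw [ha2, mul_assoc, mul_inv_cancel₀ hv, mul_one]
    · intro a _; ring
    · intro x _; ring
  have step5 : ∑ a ∈ (univ : Finset (ZMod r)).erase a₀, g (f a)
      = ∑ b : ZMod r, (quadraticChar (ZMod r) (b ^ 2 + b + 1) + 1) * g b := by
    rw [← Finset.sum_fiberwise' ((univ : Finset (ZMod r)).erase a₀) f g]
    refine Finset.sum_congr rfl fun b _ => ?_
    rw [Finset.sum_const, nsmul_eq_mul, fiber b, quadChar_card_sqrts' hchar]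
  have step6 : ∑ b : ZMod r, (quadraticChar (ZMod r) (b ^ 2 + b + 1) + 1) * g b
      = (∑ b : ZMod r, quadraticChar (ZMod r) (c * (b ^ 2 + b + 1) + d))
        + ∑ b : ZMod r, g b := by
    rw [← Finset.sum_add_distrib]
    refine Finset.sum_congr rfl fun b _ => ?_
    simp only [hg]
    have hsq := quadraticChar_sq_one (hu b)
    linear_combination quadraticChar (ZMod r) (c * (b ^ 2 + b + 1) + d) * hsq
  have hji'' : j + i ≠ 0 := fun hh => hji' (by linear_combination hh)
  have he' : 3 * c + 4 * d ≠ 0 := by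
    intro hh
    apply mul_ne_zero (mul_ne_zero h2 h3F) hji''
    rw [hcdef, hddef] at hh
    linear_combination hh
  have h44 : (4 : ZMod r) * 4⁻¹ = 1 := mul_inv_cancel₀ h4
  have hee : c * (3 * 4⁻¹) + d = (3 * c + 4 * d) * 4⁻¹ := by
    linear_combination (-(d)) * h44
  have he : c * (3 * 4⁻¹) + d ≠ 0 := by
    rw [hee]; exact mul_ne_zero he' (inv_ne_zero h4)
  have step7 : ∑ b : ZMod r, quadraticChar (ZMod r) (c * (b ^ 2 + b + 1) + d)
      = -quadraticChar (ZMod r) c := by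
    have reindex : ∑ x : ZMod r,
        quadraticChar (ZMod r) (c * ((x + -(2⁻¹)) ^ 2 + (x + -(2⁻¹)) + 1) + d)
          = ∑ b : ZMod r, quadraticChar (ZMod r) (c * (b ^ 2 + b + 1) + d) :=
      Fintype.sum_equiv (Equiv.addRight (-(2⁻¹) : ZMod r)) _ _ (fun x => rfl)
    rw [← reindex]
    have h22 : (2 : ZMod r) * 2⁻¹ = 1 := mul_inv_cancel₀ h2
    have hinv24 : (2 : ZMod r)⁻¹ * 2⁻¹ = 4⁻¹ := by
      have : ((2 : ZMod r) * 2) * (2⁻¹ * 2⁻¹) = 1 := by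
        linear_combination (2 * 2⁻¹ + 1) * h22
      have h42 : (4 : ZMod r) = 2 * 2 := by norm_num
      rw [h42]
      field_simp
    have key : ∀ x : ZMod r, c * ((x + -(2⁻¹)) ^ 2 + (x + -(2⁻¹)) + 1) + d
        = c * x ^ 2 + (c * (3 * 4⁻¹) + d) := by
      intro x
      linear_combination (c * 2⁻¹ - c * x) * h22 + (-c) * hinv24 + (-c) * h44
    simp only [key]
    exact quadChar_sum_quadratic hchar hc he
  rw [← hsplit, h_a₀]
  rw [Finset.sum_congr rfl step4, step5, step6, step7]
  ring
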